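/- Let H be a Hilbert space, R_N a finite-dimensional subspace, S_M a closed subspace with cos ω(R_N, S_M) > 0. For f ∈ H with measurement s = P_{S_M} f, let g* = argmin_{g ∈ R_N} ‖s − P_{S_M} g‖ and f* = s + P_{S_M}^⊥ g* (the PBDW reconstruction). Then ‖f − f*‖ ≤ μ(R_N, S_M) · dist(f, R_N), where μ = 1/cos ω and dist(f, R_N) = ‖f − P_{R_N} f‖. -/

import Mathlib

open MeasureTheory
open scoped RealInnerProductSpace

set_option maxHeartbeats 1000000

theorem pbdw_error_bound (H : Type*) [NormedAddCommGroup H]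
    [InnerProductSpace ℝ H] [CompleteSpace H]
    (RN SM : Submodule ℝ H) [FiniteDimensional ℝ RN] [Submodule.HasOrthogonalProjection RN]
    [Submodule.HasOrthogonalProjection SM]
    (c : ℝ)
    (hc : c = sInf {y : ℝ | ∃ r ∈ RN, ‖r‖ = 1 ∧ y = ‖(Submodule.orthogonalProjectionOnto SM r : H)‖})
    (hcpos : 0 < c) (f g : H) (hg : g ∈ RN)
    (hmin : ∀ g' ∈ RN,
      ‖(Submodule.orthogonalProjectionOnto SM f : H) - (Submodule.orthogonalProjectionOnto SM g : H)‖ ≤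
        ‖(Submodule.orthogonalProjectionOnto SM f : H) - (Submodule.orthogonalProjectionOnto SM g' : H)‖) :
    ‖f - ((Submodule.orthogonalProjectionOnto SM f : H) + (g - (Submodule.orthogonalProjectionOnto SM g : H)))‖ ≤
      (1 / c) * ‖f - (Submodule.orthogonalProjectionOnto RN f : H)‖ := by
  classical
  set P : H → H := fun x => (Submodule.orthogonalProjectionOnto SM x : H) with hPdef
  set Q : H → H := fun x => (Submodule.orthogonalProjectionOnto RN x : H) with hQdef
  show ‖f - (P f + (g - P g))‖ ≤ (1 / c) * ‖f - Q f‖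
  have Psub : ∀ x y : H, P (x - y) = P x - P y := by
    intro x y
    show ((Submodule.orthogonalProjectionOnto SM (x - y) : H)) = _
    rw [map_sub]; rfl
  have Psmul : ∀ (t : ℝ) (x : H), P (t • x) = t • P x := by
    intro t x
    show ((Submodule.orthogonalProjectionOnto SM (t • x) : H)) = _
    rw [_root_.map_smul]; rfl
  have Padd : ∀ x y : H, P (x + y) = P x + P y := by
    intro x y
    show ((Submodule.orthogonalProjectionOnto SM (x + y) : H)) = _
    rw [map_add]; rfl
  -- swap lemma for SM
  have hswap : ∀ x y : H, ⟪x, P y⟫ = ⟪P x, P y⟫ := by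
    intro x y
    have h : ⟪x - P x, P y⟫ = 0 :=
      Submodule.starProjection_inner_eq_zero (K := SM) x (P y) (SetLike.coe_mem _)
    rw [inner_sub_left] at h
    linarith
  -- P is a contraction
  have hPle : ∀ x : H, ‖P x‖ ≤ ‖x‖ := by
    intro x
    have h1 : ⟪x, P x⟫ = ‖P x‖ ^ 2 := by rw [hswap, real_inner_self_eq_norm_sq]
    have h2 : ⟪x, P x⟫ ≤ ‖x‖ * ‖P x‖ := real_inner_le_norm _ _
    rcases (norm_nonneg (P x)).eq_or_lt' with h0 | h0
    · rw [h0]; exact norm_nonneg x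
    · nlinarith
  have hbdd : BddBelow {y : ℝ | ∃ r ∈ RN, ‖r‖ = 1 ∧
      y = ‖(Submodule.orthogonalProjectionOnto SM r : H)‖} := by
    refine ⟨0, ?_⟩
    rintro y ⟨r, -, -, rfl⟩
    positivity
  -- c ≤ 1
  have hc1 : c ≤ 1 := by
    have hne : {y : ℝ | ∃ r ∈ RN, ‖r‖ = 1 ∧
        y = ‖(Submodule.orthogonalProjectionOnto SM r : H)‖}.Nonempty := by
      by_contra h
      rw [Set.not_nonempty_iff_eq_empty] at h
      rw [hc, h, Real.sInf_empty] at hcpos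
      exact lt_irrefl 0 hcpos
    obtain ⟨y, r, hrmem, hr1, rfl⟩ := hne
    have h1 : c ≤ ‖(Submodule.orthogonalProjectionOnto SM r : H)‖ := by
      rw [hc]; exact csInf_le hbdd ⟨r, hrmem, hr1, rfl⟩
    have h2 : ‖(Submodule.orthogonalProjectionOnto SM r : H)‖ ≤ ‖r‖ := hPle r
    rw [hr1] at h2
    linarith
  -- c * ‖r‖ ≤ ‖P r‖ for r ∈ RN
  have hangle : ∀ r ∈ RN, c * ‖r‖ ≤ ‖P r‖ := by
    intro r hr
    rcases eq_or_ne r 0 with h0 | h0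
    · have : P 0 = 0 := by
        show ((Submodule.orthogonalProjectionOnto SM (0 : H) : H)) = 0
        rw [map_zero]; rfl
      rw [h0, this, norm_zero, mul_zero]
    · have hnorm : (0 : ℝ) < ‖r‖ := norm_pos_iff.mpr h0
      have hmem : (‖r‖⁻¹ : ℝ) • r ∈ RN := RN.smul_mem _ hr
      have hone : ‖(‖r‖⁻¹ : ℝ) • r‖ = 1 := by
        rw [norm_smul, norm_inv, norm_norm, inv_mul_cancel₀ hnorm.ne']
      have hle : c ≤ ‖(Submodule.orthogonalProjectionOnto SM ((‖r‖⁻¹ : ℝ) • r) : H)‖ := by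
        rw [hc]; exact csInf_le hbdd ⟨_, hmem, hone, rfl⟩
      have heq : (Submodule.orthogonalProjectionOnto SM ((‖r‖⁻¹ : ℝ) • r) : H) = (‖r‖⁻¹ : ℝ) • P r :=
        Psmul _ r
      rw [heq, norm_smul, norm_inv, norm_norm] at hle
      calc c * ‖r‖ ≤ (‖r‖⁻¹ * ‖P r‖) * ‖r‖ := mul_le_mul_of_nonneg_right hle hnorm.le
        _ = ‖P r‖ := by field_simp
  set w : H := f - g with hw
  -- orthogonality from minimality
  have hortho : ∀ r ∈ RN, ⟪P w, P r⟫ = 0 := by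
    intro r hr
    set a : ℝ := ⟪P w, P r⟫ with ha
    set b : ℝ := ‖P r‖ ^ 2 with hb
    have hb0 : 0 ≤ b := by rw [hb]; positivity
    have key : ∀ t : ℝ, 0 ≤ -2 * t * a + t ^ 2 * b := by
      intro t
      have hmem : g + t • r ∈ RN := RN.add_mem hg (RN.smul_mem _ hr)
      have h1 : ‖P f - P g‖ ≤ ‖P f - P (g + t • r)‖ := hmin _ hmem
      have h2 : P f - P (g + t • r) = P w - t • P r := by
        rw [Padd, Psmul, hw, Psub]; abel
      have h3 : P f - P g = P w := by rw [hw, Psub]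
      rw [h2, h3] at h1
      have h4 : ‖P w‖ ^ 2 ≤ ‖P w - t • P r‖ ^ 2 :=
        pow_le_pow_left₀ (norm_nonneg _) h1 2
      have h5 : ‖P w - t • P r‖ ^ 2 = ‖P w‖ ^ 2 - 2 * (t * a) + t ^ 2 * b := by
        rw [norm_sub_sq_real, real_inner_smul_right, norm_smul, Real.norm_eq_abs,
          mul_pow, sq_abs, ← ha, ← hb]
      rw [h5] at h4
      linarith
    have ha2 : a ^ 2 ≤ 0 := by
      rcases eq_or_lt_of_le hb0 with hb' | hb'
      · have k1 := key 1
        have k2 := key (-1)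
        rw [← hb'] at k1 k2
        nlinarith
      · have hkey := key (a / b)
        have hbne : b ≠ 0 := ne_of_gt hb'
        have heq2 : -2 * (a / b) * a + (a / b) ^ 2 * b = -(a ^ 2) / b := by
          field_simp; ring
        rw [heq2] at hkey
        by_contra hcon
        push_neg at hcon
        have : -(a ^ 2) / b < 0 := div_neg_of_neg_of_pos (by linarith) hb'
        linarith
    have : a = 0 := by nlinarith [sq_nonneg a]
    exact this
  -- the error vector
  set η : H := w - P w with hη
  have hPη : P η = 0 := by
    have h := Submodule.orthogonalProjectionOnto_mem_subspace_eq_self (K := SM) (Submodule.orthogonalProjectionOnto SM w)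
    have hPP : P (P w) = P w := congrArg Subtype.val h
    rw [hη, Psub, hPP, sub_self]
  -- ρ = projection of η on RN
  set ρ : H := Q η with hρ
  have hρmem : ρ ∈ RN := SetLike.coe_mem _
  have hQR : ∀ r ∈ RN, ⟪η - ρ, r⟫ = 0 := fun r hr =>
    Submodule.starProjection_inner_eq_zero (K := RN) η r hr
  have h1 : ⟪η, ρ⟫ = ‖ρ‖ ^ 2 := by
    have h := hQR ρ hρmem
    rw [inner_sub_left] at h
    rw [← real_inner_self_eq_norm_sq]
    linarith
  -- bound on ‖ρ‖
  have hρbound : ‖ρ‖ ^ 2 ≤ (1 - c ^ 2) * ‖η‖ ^ 2 := by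
    rcases eq_or_ne ρ 0 with h0 | h0
    · rw [h0, norm_zero]
      nlinarith [sq_nonneg ‖η‖, mul_nonneg (mul_nonneg (sub_nonneg.mpr hc1)
        (by linarith : (0:ℝ) ≤ 1 + c)) (sq_nonneg ‖η‖)]
    · have hρpos : (0 : ℝ) < ‖ρ‖ := norm_pos_iff.mpr h0
      have h2 : ⟪η, ρ⟫ = ⟪η, ρ - P ρ⟫ := by
        rw [inner_sub_right]
        have h3 : ⟪η, P ρ⟫ = 0 := by rw [hswap, hPη, inner_zero_left]
        linarith
      have h3 : ‖ρ - P ρ‖ ^ 2 = ‖ρ‖ ^ 2 - ‖P ρ‖ ^ 2 := by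
        have hin : ⟪ρ, P ρ⟫ = ‖P ρ‖ ^ 2 := by
          rw [hswap, real_inner_self_eq_norm_sq]
        rw [norm_sub_sq_real, hin]; ring
      have h4 : c * ‖ρ‖ ≤ ‖P ρ‖ := hangle ρ hρmem
      have h6 : ‖ρ‖ ^ 2 ≤ ‖η‖ * ‖ρ - P ρ‖ := by
        rw [← h1, h2]; exact real_inner_le_norm _ _
      have h7 : (‖ρ‖ ^ 2) ^ 2 ≤ ‖η‖ ^ 2 * ‖ρ - P ρ‖ ^ 2 := by
        have h7' := pow_le_pow_left₀ (by positivity) h6 2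
        calc (‖ρ‖ ^ 2) ^ 2 ≤ (‖η‖ * ‖ρ - P ρ‖) ^ 2 := h7'
          _ = ‖η‖ ^ 2 * ‖ρ - P ρ‖ ^ 2 := by ring
      have h8 : ‖ρ - P ρ‖ ^ 2 ≤ (1 - c ^ 2) * ‖ρ‖ ^ 2 := by
        have hsq : (c * ‖ρ‖) ^ 2 ≤ ‖P ρ‖ ^ 2 :=
          pow_le_pow_left₀ (mul_nonneg hcpos.le (norm_nonneg ρ)) h4 2
        rw [h3]; nlinarith
      have h9 : (‖ρ‖ ^ 2) ^ 2 ≤ ‖η‖ ^ 2 * ((1 - c ^ 2) * ‖ρ‖ ^ 2) := by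
        calc (‖ρ‖ ^ 2) ^ 2 ≤ ‖η‖ ^ 2 * ‖ρ - P ρ‖ ^ 2 := h7
          _ ≤ ‖η‖ ^ 2 * ((1 - c ^ 2) * ‖ρ‖ ^ 2) :=
            mul_le_mul_of_nonneg_left h8 (by positivity)
      have hx : (0 : ℝ) < ‖ρ‖ ^ 2 := by positivity
      nlinarith
  -- c^2 ‖η‖^2 ≤ ‖η - ρ‖^2
  have hsq1 : c ^ 2 * ‖η‖ ^ 2 ≤ ‖η - ρ‖ ^ 2 := by
    have h6 : ‖η - ρ‖ ^ 2 = ‖η‖ ^ 2 - ‖ρ‖ ^ 2 := by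
      rw [norm_sub_sq_real, h1]; ring
    rw [h6]; nlinarith
  -- choose r₀ = Q f - g ∈ RN
  set r₀ : H := Q f - g with hr₀
  have hr₀mem : r₀ ∈ RN := RN.sub_mem (SetLike.coe_mem _) hg
  -- ρ is the best approximation to η in RN
  have hsq2 : ‖η - ρ‖ ^ 2 ≤ ‖η - r₀‖ ^ 2 := by
    have ha : ⟪η - ρ, r₀⟫ = 0 := hQR r₀ hr₀mem
    have hb' : ⟪η - ρ, ρ⟫ = 0 := hQR ρ hρmem
    have hd : η - r₀ = (η - ρ) + (ρ - r₀) := by abel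
    rw [hd, norm_add_sq_real]
    have he : ⟪η - ρ, ρ - r₀⟫ = 0 := by
      rw [inner_sub_right, ha, hb']; ring
    rw [he]
    nlinarith [sq_nonneg ‖ρ - r₀‖]
  -- ‖η - r₀‖^2 ≤ ‖f - Q f‖^2
  have hsq3 : ‖η - r₀‖ ^ 2 ≤ ‖f - Q f‖ ^ 2 := by
    have hd : η - r₀ = (f - Q f) - P w := by
      rw [hη, hr₀, hw]; abel
    have hinner : ⟪f - Q f, P w⟫ = ‖P w‖ ^ 2 := by
      rw [hswap]
      have hfq : P (f - Q f) = P w - P r₀ := by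
        rw [hr₀, hw, Psub, Psub, Psub]; abel
      rw [hfq, inner_sub_left, real_inner_comm (P w) (P r₀), hortho _ hr₀mem,
        real_inner_self_eq_norm_sq]
      ring
    rw [hd, norm_sub_sq_real, hinner]
    nlinarith [sq_nonneg ‖P w‖]
  -- combine
  have hgoal_eq : f - (P f + (g - P g)) = η := by
    rw [hη, hw, Psub]; abel
  rw [hgoal_eq]
  have hchain : (c * ‖η‖) ^ 2 ≤ ‖f - Q f‖ ^ 2 := by
    calc (c * ‖η‖) ^ 2 = c ^ 2 * ‖η‖ ^ 2 := by ring
      _ ≤ ‖η - ρ‖ ^ 2 := hsq1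
      _ ≤ ‖η - r₀‖ ^ 2 := hsq2
      _ ≤ ‖f - Q f‖ ^ 2 := hsq3
  have hle : c * ‖η‖ ≤ ‖f - Q f‖ := by
    nlinarith [mul_nonneg hcpos.le (norm_nonneg η), norm_nonneg (f - Q f)]
  have hcne : c ≠ 0 := ne_of_gt hcpos
  calc ‖η‖ = (1 / c) * (c * ‖η‖) := by field_simp
    _ ≤ (1 / c) * ‖f - Q f‖ :=
      mul_le_mul_of_nonneg_left hle (by positivity)
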